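/- Let e₁ and e₂ be two distinct ε-products, i.e., products of factors ε(i,j) = ε^{2^{i·δ − j}} over finite sets I(e₁) ≠ I(e₂) of index pairs, and let c₁, c₂ > 0 be constants. If I(e₁) is smaller than I(e₂) in the lexicographic-by-largest-differing-pair sense, then there exists ε₀ > 0 such that c₁·e₁(ε) > c₂·e₂(ε) for all 0 < ε < ε₀. -/

import Mathlib

open Finset

lemma pow2sum (S : Finset ℤ) : ∀ m : ℤ, (∀ k ∈ S, k < m) → ∑ k ∈ S, (2:ℝ)^k < (2:ℝ)^m := by
  induction S using Finset.strongInduction with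
  | _ S ih =>
    intro m hm
    rcases S.eq_empty_or_nonempty with rfl | hS
    · simpa using zpow_pos (by norm_num : (0:ℝ) < 2) m
    · set M := S.max' hS with hMdef
      have hMS : M ∈ S := S.max'_mem hS
      have h1 : ∑ k ∈ S.erase M, (2:ℝ)^k < (2:ℝ)^M := by
        apply ih _ (Finset.erase_ssubset hMS)
        intro k hk
        have h := S.le_max' k (Finset.mem_of_mem_erase hk)
        have hne := Finset.ne_of_mem_erase hk
        omega
      have hsplit : ∑ k ∈ S, (2:ℝ)^k = (2:ℝ)^M + ∑ k ∈ S.erase M, (2:ℝ)^k :=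
        (Finset.add_sum_erase S _ hMS).symm
      rw [hsplit]
      have h2 : (2:ℝ)^M + (2:ℝ)^M = (2:ℝ)^(M+1) := by
        rw [zpow_add₀ (by norm_num : (2:ℝ) ≠ 0)]; ring
      have hMm : M + 1 ≤ m := hm M hMS
      calc (2:ℝ)^M + ∑ k ∈ S.erase M, (2:ℝ)^k < (2:ℝ)^M + (2:ℝ)^M := by linarith
        _ = (2:ℝ)^(M+1) := h2
        _ ≤ (2:ℝ)^m := zpow_le_zpow_right₀ (by norm_num) hMm

/-- if I(e₁) is smaller than I(e₂) in the
lexicographic-by-largest-differing-pair sense, then for positive constants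
c₁, c₂ there exists ε₀ > 0 with c₁·e₁(ε) > c₂·e₂(ε) for all 0 < ε < ε₀. -/
theorem stmt2 (n d δ : ℕ) (hn : 1 ≤ n) (hd : 1 ≤ d) (hδ : d ≤ δ)
    (c₁ c₂ : ℝ) (hc₁ : 0 < c₁) (hc₂ : 0 < c₂)
    (I₁ I₂ : Finset (ℕ × ℕ)) (hne : I₁ ≠ I₂)
    (hval : ∀ p ∈ I₁ ∪ I₂, p.1 < n ∧ 1 ≤ p.2 ∧ p.2 ≤ d)
    (prec : ℕ × ℕ → ℕ × ℕ → Prop)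
    (hprec : ∀ p q, prec p q ↔ p.1 < q.1 ∨ (p.1 = q.1 ∧ q.2 < p.2))
    (hsmaller :
      (I₁ \ I₂ = ∅) ∨
      (∃ a ∈ I₁ \ I₂, ∃ b ∈ I₂ \ I₁,
        (∀ a' ∈ I₁ \ I₂, a' = a ∨ prec a' a) ∧
        (∀ b' ∈ I₂ \ I₁, b' = b ∨ prec b' b) ∧ prec a b)) :
    ∃ ε₀ > (0:ℝ), ∀ ε : ℝ, 0 < ε → ε < ε₀ →
      c₂ * ∏ p ∈ I₂, ε ^ ((2:ℝ) ^ ((p.1 * δ : ℤ) - (p.2 : ℤ))) <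
      c₁ * ∏ p ∈ I₁, ε ^ ((2:ℝ) ^ ((p.1 * δ : ℤ) - (p.2 : ℤ))) := by
  set e : ℕ × ℕ → ℤ := fun p => (p.1 * δ : ℤ) - (p.2 : ℤ) with he
  set E : ℕ × ℕ → ℝ := fun p => (2:ℝ) ^ (e p) with hE
  -- prec implies strict inequality of exponents, for valid pairs
  have hlex : ∀ p q : ℕ × ℕ, 1 ≤ p.2 ∧ p.2 ≤ δ → 1 ≤ q.2 ∧ q.2 ≤ δ → prec p q → e p < e q := by
    intro p q hp hq hpq
    rw [hprec] at hpq
    simp only [he]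
    have hp1 : (1:ℤ) ≤ (p.2:ℤ) := by exact_mod_cast hp.1
    have hpd : (p.2:ℤ) ≤ (δ:ℤ) := by exact_mod_cast hp.2
    have hq1 : (1:ℤ) ≤ (q.2:ℤ) := by exact_mod_cast hq.1
    have hqd : (q.2:ℤ) ≤ (δ:ℤ) := by exact_mod_cast hq.2
    rcases hpq with h | ⟨h1, h2⟩
    · have hmul : (p.1:ℤ) * δ + δ ≤ (q.1:ℤ) * δ := by
        have h2 : ((p.1 + 1) * δ : ℕ) ≤ q.1 * δ := Nat.mul_le_mul_right _ (by omega)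
        push_cast at h2
        linarith
      linarith
    · have h1' : (p.1:ℤ) * δ = (q.1:ℤ) * δ := by rw [h1]
      have h2' : (q.2:ℤ) < p.2 := by exact_mod_cast h2
      linarith
  -- exponent sums over the symmetric differences
  have hEpos : ∀ p, 0 < E p := fun p => zpow_pos (by norm_num) _
  have hkey : ∑ p ∈ I₁ \ I₂, E p < ∑ p ∈ I₂ \ I₁, E p := by
    rcases hsmaller with h | ⟨a, ha, b, hb, hmax1, _, hab⟩
    · rw [h, Finset.sum_empty]
      have hne2 : (I₂ \ I₁).Nonempty := by
        rcases Finset.eq_empty_or_nonempty (I₂ \ I₁) with h2 | h2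
        · exfalso
          apply hne
          apply Finset.Subset.antisymm
          · intro x hx
            by_contra hx2
            exact absurd (Finset.mem_sdiff.2 ⟨hx, hx2⟩) (by simp [h])
          · intro x hx
            by_contra hx2
            exact absurd (Finset.mem_sdiff.2 ⟨hx, hx2⟩) (by simp [h2])
        · exact h2
      exact Finset.sum_pos (fun p _ => hEpos p) hne2
    · -- all exponents in I₁\I₂ are < e b
      have hvalid : ∀ p ∈ I₁ \ I₂ ∪ (I₂ \ I₁), 1 ≤ p.2 ∧ p.2 ≤ δ := by
        intro p hp
        have : p ∈ I₁ ∪ I₂ := by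
          rcases Finset.mem_union.1 hp with h | h
          · exact Finset.mem_union_left _ (Finset.mem_sdiff.1 h).1
          · exact Finset.mem_union_right _ (Finset.mem_sdiff.1 h).1
        obtain ⟨_, h1, h2⟩ := hval p this
        exact ⟨h1, le_trans h2 hδ⟩
      have hb2 := hvalid b (Finset.mem_union_right _ hb)
      have ha2 := hvalid a (Finset.mem_union_left _ ha)
      have hlt : ∀ p ∈ I₁ \ I₂, e p < e b := by
        intro p hp
        have hp2 := hvalid p (Finset.mem_union_left _ hp)
        rcases hmax1 p hp with rfl | h
        · exact hlex p b hp2 hb2 hab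
        · calc e p < e a := hlex p a hp2 ha2 h
            _ < e b := hlex a b ha2 hb2 hab
      -- e injective on I₁ \ I₂
      have hinj : ∀ p ∈ I₁ \ I₂, ∀ q ∈ I₁ \ I₂, e p = e q → p = q := by
        intro p hp q hq heq
        by_contra hpq
        have hp2 := hvalid p (Finset.mem_union_left _ hp)
        have hq2 := hvalid q (Finset.mem_union_left _ hq)
        have : prec p q ∨ prec q p := by
          rw [hprec, hprec]
          rcases Prod.ext_iff.not.1 hpq with _
          omega
        rcases this with h | h
        · exact absurd heq (ne_of_lt (hlex p q hp2 hq2 h))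
        · exact absurd heq.symm (ne_of_lt (hlex q p hq2 hp2 h))
      have h2 : ∑ p ∈ I₁ \ I₂, E p < (2:ℝ) ^ (e b) := by
        have h1 : ∑ p ∈ I₁ \ I₂, E p = ∑ k ∈ (I₁ \ I₂).image e, (2:ℝ)^k := by
          rw [Finset.sum_image hinj]
        rw [h1]
        apply pow2sum
        intro k hk
        obtain ⟨p, hp, rfl⟩ := Finset.mem_image.1 hk
        exact hlt p hp
      have h3 : (2:ℝ) ^ (e b) ≤ ∑ p ∈ I₂ \ I₁, E p :=
        Finset.single_le_sum (fun p _ => (hEpos p).le) hb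
      linarith
  -- total exponent sums
  have hsum : ∑ p ∈ I₁, E p < ∑ p ∈ I₂, E p := by
    have h1 := Finset.sum_inter_add_sum_sdiff I₁ I₂ E
    have h2 := Finset.sum_inter_add_sum_sdiff I₂ I₁ E
    rw [Finset.inter_comm] at h2
    linarith
  set S₁ := ∑ p ∈ I₁, E p
  set S₂ := ∑ p ∈ I₂, E p
  set t := S₂ - S₁ with ht
  have htpos : 0 < t := by simp [ht]; linarith
  have hcd : 0 < c₁ / c₂ := div_pos hc₁ hc₂
  refine ⟨min 1 ((c₁ / c₂) ^ (1 / t)), lt_min one_pos (Real.rpow_pos_of_pos hcd _), ?_⟩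
  intro ε hε hεlt
  have hε1 : ε < (c₁ / c₂) ^ (1 / t) := lt_of_lt_of_le hεlt (min_le_right _ _)
  have hεt : ε ^ t < c₁ / c₂ := by
    have := Real.rpow_lt_rpow hε.le hε1 htpos
    rwa [← Real.rpow_mul hcd.le, one_div_mul_cancel htpos.ne', Real.rpow_one] at this
  have hprod : ∀ (I : Finset (ℕ × ℕ)),
      ∏ p ∈ I, ε ^ ((2:ℝ) ^ ((p.1 * δ : ℤ) - (p.2 : ℤ))) = ε ^ (∑ p ∈ I, E p) := by
    intro I
    rw [Real.rpow_sum_of_pos hε]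
  rw [hprod, hprod]
  have hP : 0 < ε ^ S₁ := Real.rpow_pos_of_pos hε _
  have hsplit : ε ^ S₂ = ε ^ S₁ * ε ^ t := by
    rw [← Real.rpow_add hε, ht]; ring_nf
  rw [hsplit]
  have hfinal : c₂ * (ε ^ S₁ * ε ^ t) < c₂ * (ε ^ S₁ * (c₁ / c₂)) := by
    apply mul_lt_mul_of_pos_left _ hc₂
    exact mul_lt_mul_of_pos_left hεt hP
  have : c₂ * (ε ^ S₁ * (c₁ / c₂)) = c₁ * ε ^ S₁ := by
    field_simp
  linarith
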